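/- For every x_j ∈ [0,1], the right-region maximal payoff satisfies U_i((2 + x_j)/3, x_j) = ∫_{(1−x_j)/3}^{1−x_j} c(b) db − 2 ∫₀^{(1−x_j)/3} c(b) db, i.e. U_i((2 + x_j)/3, x_j) = F((1 − x_j)/3). -/

import Mathlib

open MeasureTheory Set

/-- The wage the benefactor at `b` pays: the upper envelope of the two
politicians' policy-production costs. -/
noncomputable def w (c : ℝ → ℝ) (x₁ x₂ b : ℝ) : ℝ :=
  max (c |x₁ - b|) (c |x₂ - b|)

/-- Politician `i`'s expected utility when she locates at `xi` and the
opponent at `xj`, benefactors being uniform on `[0,1]`. -/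
noncomputable def U (c : ℝ → ℝ) (xi xj : ℝ) : ℝ :=
  ∫ b in (0:ℝ)..1, (w c xi xj b - c |xi - b|)


/-- `F t = ∫_t^{3t} c - 2∫_0^t c`, the maximal regional payoff function. -/
noncomputable def F (c : ℝ → ℝ) (t : ℝ) : ℝ :=
  (∫ b in t..(3*t), c b) - 2 * ∫ b in (0:ℝ)..t, c b

theorem right_region_max_payoff (c : ℝ → ℝ)
    (hc : ContinuousOn c (Icc 0 1)) (hmono : StrictMonoOn c (Icc 0 1))
    (xj : ℝ) (hxj : xj ∈ Icc (0:ℝ) 1) :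
    U c ((2 + xj) / 3) xj
      = (∫ b in ((1 - xj) / 3)..(1 - xj), c b)
        - 2 * ∫ b in (0:ℝ)..((1 - xj) / 3), c b ∧
    U c ((2 + xj) / 3) xj = F c ((1 - xj) / 3) := by
  obtain ⟨hxj0, hxj1⟩ := hxj
  set xi : ℝ := (2 + xj) / 3 with hxi
  set m : ℝ := (1 + 2 * xj) / 3 with hmdef
  set t : ℝ := (1 - xj) / 3 with htdef
  have ht0 : 0 ≤ t := by simp only [htdef]; linarith
  have hm0 : (0:ℝ) ≤ m := by simp only [hmdef]; linarith
  have hxjm : xj ≤ m := by simp only [hmdef]; linarith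
  have hmxi : m ≤ xi := by simp only [hmdef, hxi]; linarith
  have hxi1 : xi ≤ 1 := by simp only [hxi]; linarith
  have hxi0 : 0 ≤ xi := by simp only [hxi]; linarith
  -- membership lemma
  have hmem : ∀ x b : ℝ, 0 ≤ x → x ≤ 1 → b ∈ Icc (0:ℝ) 1 → |x - b| ∈ Icc (0:ℝ) 1 := by
    intro x b hx0 hx1 hb
    obtain ⟨hb0, hb1⟩ := hb
    constructor
    · exact abs_nonneg _
    · rw [abs_le]; constructor <;> linarith
  have hmonoLe := hmono.monotoneOn
  -- continuity of the two cost maps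
  have habs : ∀ x : ℝ, 0 ≤ x → x ≤ 1 → ContinuousOn (fun b => c |x - b|) (Icc 0 1) := by
    intro x hx0 hx1
    exact hc.comp ((continuous_const.sub continuous_id).abs).continuousOn
      (fun b hb => hmem x b hx0 hx1 hb)
  have hcxi := habs xi hxi0 hxi1
  have hcxj := habs xj hxj0 hxj1
  have hfcont : ContinuousOn (fun b => w c xi xj b - c |xi - b|) (Icc 0 1) := by
    exact (hcxi.sup hcxj).sub hcxi
  -- integrability on subintervals of [0,1]
  have hint : ∀ a b : ℝ, 0 ≤ a → b ≤ 1 → a ≤ b →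
      IntervalIntegrable (fun b => w c xi xj b - c |xi - b|) volume a b := by
    intro a b ha hb hab
    exact (hfcont.mono (Icc_subset_Icc ha hb)).intervalIntegrable_of_Icc hab
  -- first piece: zero on [0, m]
  have h1 : (∫ b in (0:ℝ)..m, (w c xi xj b - c |xi - b|)) = 0 := by
    rw [intervalIntegral.integral_congr (g := fun _ => (0:ℝ))]
    · simp
    · intro b hb
      rw [uIcc_of_le hm0] at hb
      obtain ⟨hb0, hbm⟩ := hb
      have hb1 : b ≤ 1 := le_trans hbm (le_trans hmxi hxi1)
      have e2 : |xi - b| = xi - b := abs_of_nonneg (by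
        simp only [hxi, hmdef] at *; linarith)
      have hle : |xj - b| ≤ |xi - b| := by
        rw [e2, abs_le]
        constructor <;> (simp only [hxi, hmdef] at *; linarith)
      have := hmonoLe (hmem xj b hxj0 hxj1 ⟨hb0, hb1⟩) (hmem xi b hxi0 hxi1 ⟨hb0, hb1⟩) hle
      simp only [w]
      rw [max_eq_left this]
      ring
  -- second piece: on [m, xi]
  have h2 : (∫ b in m..xi, (w c xi xj b - c |xi - b|))
      = (∫ b in m..xi, c (b - xj)) - ∫ b in m..xi, c (xi - b) := by
    rw [← intervalIntegral.integral_sub]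
    · apply intervalIntegral.integral_congr
      intro b hb
      rw [uIcc_of_le hmxi] at hb
      obtain ⟨hbm, hbxi⟩ := hb
      have hb0 : 0 ≤ b := le_trans hm0 hbm
      have hb1 : b ≤ 1 := le_trans hbxi hxi1
      have e1 : |xj - b| = b - xj := by rw [abs_sub_comm]; exact abs_of_nonneg (by linarith)
      have e2 : |xi - b| = xi - b := abs_of_nonneg (by linarith)
      have hle : xi - b ≤ b - xj := by
        have : m = (xi + xj) / 2 := by simp only [hmdef, hxi]; ring
        linarith [hbm, this ▸ hbm]
      have hmx : xi - b ∈ Icc (0:ℝ) 1 := ⟨by linarith, by linarith⟩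
      have hmy : b - xj ∈ Icc (0:ℝ) 1 := ⟨by linarith, by linarith⟩
      have := hmonoLe hmx hmy hle
      simp only [w, e1, e2]
      rw [max_eq_right this]
    · apply ContinuousOn.intervalIntegrable_of_Icc hmxi
      apply hc.comp (continuous_id.sub continuous_const).continuousOn
      intro b hb
      simp only [id_eq, mem_Icc, Pi.sub_apply] at hb ⊢
      constructor <;> (simp only [hxi, hmdef] at *; linarith)
    · apply ContinuousOn.intervalIntegrable_of_Icc hmxi
      apply hc.comp (continuous_const.sub continuous_id).continuousOn
      intro b hb
      simp only [id_eq, mem_Icc, Pi.sub_apply] at hb ⊢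
      constructor <;> (simp only [hxi, hmdef] at *; linarith)
  -- third piece: on [xi, 1]
  have h3 : (∫ b in xi..1, (w c xi xj b - c |xi - b|))
      = (∫ b in xi..1, c (b - xj)) - ∫ b in xi..1, c (b - xi) := by
    rw [← intervalIntegral.integral_sub]
    · apply intervalIntegral.integral_congr
      intro b hb
      rw [uIcc_of_le hxi1] at hb
      obtain ⟨hbxi, hb1⟩ := hb
      have hb0 : 0 ≤ b := le_trans hxi0 hbxi
      have hxjxi : xj ≤ xi := by simp only [hxi]; linarith
      have e1 : |xj - b| = b - xj := by
        rw [abs_sub_comm]; exact abs_of_nonneg (by linarith)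
      have e2 : |xi - b| = b - xi := by
        rw [abs_sub_comm]; exact abs_of_nonneg (by linarith)
      have hmx : b - xi ∈ Icc (0:ℝ) 1 := ⟨by linarith, by linarith⟩
      have hmy : b - xj ∈ Icc (0:ℝ) 1 := ⟨by linarith, by linarith⟩
      have := hmonoLe hmx hmy (by linarith)
      simp only [w, e1, e2]
      rw [max_eq_right this]
    · apply ContinuousOn.intervalIntegrable_of_Icc hxi1
      apply hc.comp (continuous_id.sub continuous_const).continuousOn
      intro b hb
      simp only [id_eq, mem_Icc, Pi.sub_apply] at hb ⊢
      constructor <;> (simp only [hxi] at *; linarith)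
    · apply ContinuousOn.intervalIntegrable_of_Icc hxi1
      apply hc.comp (continuous_id.sub continuous_const).continuousOn
      intro b hb
      simp only [id_eq, mem_Icc, Pi.sub_apply] at hb ⊢
      constructor <;> (simp only [hxi] at *; linarith)
  -- change of variables
  have c1 : (∫ b in m..xi, c (b - xj)) = ∫ b in t..(2*t), c b := by
    rw [intervalIntegral.integral_comp_sub_right]
    congr 1 <;> (simp only [hmdef, hxi, htdef]; ring)
  have c2 : (∫ b in xi..1, c (b - xj)) = ∫ b in (2*t)..(3*t), c b := by
    rw [intervalIntegral.integral_comp_sub_right]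
    congr 1 <;> (simp only [hxi, htdef]; ring)
  have c3 : (∫ b in m..xi, c (xi - b)) = ∫ b in (0:ℝ)..t, c b := by
    rw [intervalIntegral.integral_comp_sub_left]
    congr 1 <;> (simp only [hmdef, hxi, htdef]; ring)
  have c4 : (∫ b in xi..1, c (b - xi)) = ∫ b in (0:ℝ)..t, c b := by
    rw [intervalIntegral.integral_comp_sub_right]
    congr 1 <;> (simp only [hxi, htdef]; ring)
  -- combine t..2t and 2t..3t
  have hjoin : (∫ b in t..(2*t), c b) + (∫ b in (2*t)..(3*t), c b) = ∫ b in t..(3*t), c b := by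
    apply intervalIntegral.integral_add_adjacent_intervals
    · apply ContinuousOn.intervalIntegrable_of_Icc (by linarith)
      exact hc.mono (Icc_subset_Icc ht0 (by simp only [htdef]; linarith))
    · apply ContinuousOn.intervalIntegrable_of_Icc (by linarith)
      exact hc.mono (Icc_subset_Icc (by linarith) (by simp only [htdef]; linarith))
  have hsplit : U c xi xj = (∫ b in (0:ℝ)..m, (w c xi xj b - c |xi - b|))
      + ((∫ b in m..xi, (w c xi xj b - c |xi - b|))
        + (∫ b in xi..1, (w c xi xj b - c |xi - b|))) := by
    rw [U]
    rw [intervalIntegral.integral_add_adjacent_intervals (hint m xi hm0 hxi1 hmxi)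
      (hint xi 1 hxi0 le_rfl hxi1)]
    rw [intervalIntegral.integral_add_adjacent_intervals (hint 0 m le_rfl (by linarith) hm0)
      (hint m 1 hm0 le_rfl (by linarith))]
  have key : U c xi xj = (∫ b in t..(3*t), c b) - 2 * ∫ b in (0:ℝ)..t, c b := by
    rw [hsplit, h1, h2, h3, c1, c2, c3, c4]
    linarith [hjoin]
  have h3t : 3 * t = 1 - xj := by simp only [htdef]; ring
  refine ⟨?_, ?_⟩
  · rw [key, h3t]
  · rw [key, F]
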